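/- Let B, E, C : ℝ → ℝ be continuously differentiable functions satisfying B′ = (1+C)E, E′ = −BE, C′ = −(2+C)B on ℝ, and let α ∈ ℝ be such that C(0) = αE(0) − 2 and B(0)² = −1 − αE(0)² + 2E(0). Then for all y ∈ ℝ: C(y) = αE(y) − 2, B(y)² = −1 − αE(y)² + 2E(y), and (E′(y))² + αE(y)⁴ − 2E(y)³ + E(y)² = 0. -/

import Mathlib

/-- For continuously differentiable `B, E, C : ℝ → ℝ` solving
`B′ = (1+C)E, E′ = −BE, C′ = −(2+C)B` on `ℝ`, with `C(0) = αE(0) − 2` and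
`B(0)² = −1 − αE(0)² + 2E(0)`, the relations `C = αE − 2`,
`B² = −1 − αE² + 2E` and `(E′)² + αE⁴ − 2E³ + E² = 0` hold on all of `ℝ`. -/
theorem stmt_15 (B E C : ℝ → ℝ) (α : ℝ)
    (hB : ContDiff ℝ 1 B) (hE : ContDiff ℝ 1 E) (hC : ContDiff ℝ 1 C)
    (hsys : ∀ y : ℝ,
      deriv B y = (1 + C y) * E y ∧
      deriv E y = -(B y) * E y ∧
      deriv C y = -(2 + C y) * B y)
    (hC0 : C 0 = α * E 0 - 2)
    (hB0 : B 0 ^ 2 = -1 - α * E 0 ^ 2 + 2 * E 0) :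
    ∀ y : ℝ,
      C y = α * E y - 2 ∧
      B y ^ 2 = -1 - α * E y ^ 2 + 2 * E y ∧
      (deriv E y) ^ 2 + α * E y ^ 4 - 2 * E y ^ 3 + E y ^ 2 = 0 := by
  have hBd : Differentiable ℝ B := hB.differentiable one_ne_zero
  have hEd : Differentiable ℝ E := hE.differentiable one_ne_zero
  have hCd : Differentiable ℝ C := hC.differentiable one_ne_zero
  have hBc : Continuous B := hB.continuous
  set I : ℝ → ℝ := fun y => ∫ t in (0:ℝ)..y, B t with hIdef
  have hIder : ∀ y, HasDerivAt I (B y) y := by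
    intro y
    exact intervalIntegral.integral_hasDerivAt_right
      (hBc.intervalIntegrable 0 y) (hBc.stronglyMeasurableAtFilter _ _)
      hBc.continuousAt
  set G : ℝ → ℝ := fun y => (C y - α * E y + 2) * Real.exp (I y) with hGdef
  have hGder : ∀ y, HasDerivAt G 0 y := by
    intro y
    have h1 : HasDerivAt (fun y => C y - α * E y + 2)
        (deriv C y - α * deriv E y) y := by
      exact (((hCd y).hasDerivAt).sub (((hEd y).hasDerivAt).const_mul α)).add_const 2
    have h2 : HasDerivAt (fun y => Real.exp (I y)) (Real.exp (I y) * B y) y :=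
      (Real.hasDerivAt_exp (I y)).comp y (hIder y)
    have : HasDerivAt G _ y := h1.fun_mul h2
    convert this using 1
    obtain ⟨_, hE', hC'⟩ := hsys y
    rw [hE', hC']
    ring
  have hGconst : ∀ y : ℝ, G y = G 0 := by
    have hdiff : Differentiable ℝ G := fun y => (hGder y).differentiableAt
    have hzero : ∀ y, deriv G y = 0 := fun y => (hGder y).deriv
    intro y
    exact is_const_of_deriv_eq_zero hdiff hzero y 0
  have hCrel : ∀ y : ℝ, C y = α * E y - 2 := by
    intro y
    have h0 : G 0 = 0 := by
      simp [hGdef, hC0]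
    have := hGconst y
    rw [h0, hGdef] at this
    have hexp : Real.exp (I y) ≠ 0 := Real.exp_ne_zero _
    have := mul_eq_zero.mp this
    rcases this with h | h
    · linarith
    · exact absurd h hexp
  set F : ℝ → ℝ := fun y => B y ^ 2 + 1 + α * E y ^ 2 - 2 * E y with hFdef
  have hFder : ∀ y, HasDerivAt F 0 y := by
    intro y
    have h1 : HasDerivAt (fun y => B y ^ 2) (2 * B y * deriv B y) y := by
      have := ((hBd y).hasDerivAt).fun_pow 2
      simpa [mul_comm, mul_assoc, mul_left_comm] using this
    have h2 : HasDerivAt (fun y => E y ^ 2) (2 * E y * deriv E y) y := by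
      have := ((hEd y).hasDerivAt).fun_pow 2
      simpa [mul_comm, mul_assoc, mul_left_comm] using this
    have h3 : HasDerivAt F
        (2 * B y * deriv B y + α * (2 * E y * deriv E y) - 2 * deriv E y) y :=
      ((h1.add_const 1).add (h2.const_mul α)).sub (((hEd y).hasDerivAt).const_mul 2)
    convert h3 using 1
    obtain ⟨hB', hE', _⟩ := hsys y
    rw [hB', hE', hCrel y]
    ring
  have hFconst : ∀ y : ℝ, F y = F 0 := by
    have hdiff : Differentiable ℝ F := fun y => (hFder y).differentiableAt
    have hzero : ∀ y, deriv F y = 0 := fun y => (hFder y).deriv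
    intro y
    exact is_const_of_deriv_eq_zero hdiff hzero y 0
  have hBrel : ∀ y : ℝ, B y ^ 2 = -1 - α * E y ^ 2 + 2 * E y := by
    intro y
    have := hFconst y
    rw [hFdef] at this
    simp only at this
    nlinarith [this]
  intro y
  refine ⟨hCrel y, hBrel y, ?_⟩
  obtain ⟨_, hE', _⟩ := hsys y
  rw [hE']
  nlinarith [hBrel y, sq_nonneg (E y)]
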